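/- Let E be a real normed vector space, K ≥ 2, and let z : E → (Fin K → ℝ) be a continuous map (the logits of a classifier). Fix y ∈ Fin K and β > 0, and define for w ∈ E the logit margin φ(w) = z(w)_y − max_{y' ≠ y} z(w)_{y'} and the soft logit margin Φ(w) = z(w)_y − (1/β) · log(Σ_{y' ≠ y} exp(β · z(w)_{y'})). Suppose x ∈ E satisfies Φ(x) > 0 and x̂ ∈ E satisfies φ(x̂) = 0. Then the metric infimum distance from x to the soft decision boundary {w : Φ(w) = 0} is at most ‖x̂ − x‖. Consequently, if the exact decision boundary {w : φ(w) = 0} is nonempty, then the infimum distance from x to {w : Φ(w) = 0} is at most the infimum distance from x to {w : φ(w) = 0} (i.e., R^soft(x) ≤ R(x)). -/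
import Mathlib


/-- Proposition on the soft decision boundary, part 2: the soft decision boundary is
always closer to x than the exact decision boundary, i.e. R^soft(x) ≤ R(x). -/
theorem soft_margin_le_margin
    {E : Type*} [NormedAddCommGroup E] [NormedSpace ℝ E]
    {K : ℕ} (hK : 2 ≤ K)
    (z : E → Fin K → ℝ) (hz : Continuous z)
    (y : Fin K) (β : ℝ) (hβ : 0 < β)
    (hne : (Finset.univ.erase y).Nonempty)
    (φ Φ : E → ℝ)
    (hφ : ∀ w : E, φ w = z w y - (Finset.univ.erase y).sup' hne (z w))
    (hΦ : ∀ w : E,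
      Φ w = z w y - (1 / β) * Real.log (∑ y' ∈ Finset.univ.erase y, Real.exp (β * z w y')))
    (x : E) (hx : 0 < Φ x) :
    (∀ xhat : E, φ xhat = 0 → Metric.infDist x {w : E | Φ w = 0} ≤ ‖xhat - x‖) ∧
      ({w : E | φ w = 0}.Nonempty →
        Metric.infDist x {w : E | Φ w = 0} ≤ Metric.infDist x {w : E | φ w = 0}) := by
  set S : E → ℝ := fun w => ∑ y' ∈ Finset.univ.erase y, Real.exp (β * z w y') with hSdef
  have hSc : Continuous S := by
    apply continuous_finset_sum
    intro i _
    exact Real.continuous_exp.comp (continuous_const.mul ((continuous_apply i).comp hz))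
  have hSpos : ∀ w, 0 < S w := fun w =>
    Finset.sum_pos (fun i _ => Real.exp_pos _) hne
  have hΦeq : Φ = fun w => z w y - (1 / β) * Real.log (S w) := funext hΦ
  have hΦc : Continuous Φ := by
    rw [hΦeq]
    refine ((continuous_apply y).comp hz).sub (continuous_const.mul ?_)
    rw [continuous_iff_continuousAt]
    intro w
    exact (Real.continuousAt_log (hSpos w).ne').comp hSc.continuousAt
  have key : ∀ xhat : E, φ xhat = 0 → Metric.infDist x {w : E | Φ w = 0} ≤ ‖xhat - x‖ := by
    intro xhat hhat
    -- Φ xhat ≤ 0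
    have hΦhat : Φ xhat ≤ 0 := by
      obtain ⟨y₀, hy₀, hsup⟩ := Finset.exists_mem_eq_sup' hne (z xhat)
      have hterm : Real.exp (β * z xhat y₀) ≤ S xhat :=
        Finset.single_le_sum (f := fun i => Real.exp (β * z xhat i))
          (fun i _ => (Real.exp_pos _).le) hy₀
      have hlog : β * z xhat y₀ ≤ Real.log (S xhat) :=
        (Real.le_log_iff_exp_le (hSpos xhat)).2 hterm
      have h1 : z xhat y₀ ≤ (1 / β) * Real.log (S xhat) := by
        rw [div_mul_eq_mul_div, le_div_iff₀ hβ, one_mul, mul_comm]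
        exact hlog
      have hzy : z xhat y = z xhat y₀ := by
        have := hφ xhat
        rw [hhat] at this
        linarith [this, hsup.symm]
      rw [hΦ xhat, hzy]
      linarith
    -- IVT along the segment
    set γ : ℝ → E := fun t => x + t • (xhat - x) with hγdef
    have hγc : Continuous γ := continuous_const.add (continuous_id.smul continuous_const)
    have hγ0 : γ 0 = x := by simp [hγdef]
    have hγ1 : γ 1 = xhat := by simp [hγdef]
    have hsub : Set.Icc ((Φ ∘ γ) 1) ((Φ ∘ γ) 0) ⊆ (Φ ∘ γ) '' Set.Icc 0 1 :=
      intermediate_value_Icc' (by norm_num) ((hΦc.comp hγc).continuousOn)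
    have h0mem : (0 : ℝ) ∈ Set.Icc ((Φ ∘ γ) 1) ((Φ ∘ γ) 0) := by
      constructor
      · simpa [hγ1] using hΦhat
      · simpa [hγ0] using hx.le
    obtain ⟨t, ht, hft⟩ := hsub h0mem
    have hmem : γ t ∈ {w : E | Φ w = 0} := hft
    calc Metric.infDist x {w : E | Φ w = 0} ≤ dist x (γ t) :=
          Metric.infDist_le_dist_of_mem hmem
      _ = ‖t • (xhat - x)‖ := by
          rw [dist_eq_norm, hγdef]
          simp [norm_sub_rev]
      _ = |t| * ‖xhat - x‖ := by rw [norm_smul, Real.norm_eq_abs]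
      _ ≤ 1 * ‖xhat - x‖ := by
          apply mul_le_mul_of_nonneg_right _ (norm_nonneg _)
          rw [abs_le]
          exact ⟨by linarith [ht.1], ht.2⟩
      _ = ‖xhat - x‖ := one_mul _
  refine ⟨key, fun hne' => ?_⟩
  by_contra h
  push_neg at h
  obtain ⟨w, hw, hlt⟩ := (Metric.infDist_lt_iff hne').1 h
  have : Metric.infDist x {w : E | Φ w = 0} ≤ dist x w := by
    calc Metric.infDist x {w : E | Φ w = 0} ≤ ‖w - x‖ := key w hw
      _ = dist x w := by rw [dist_eq_norm, norm_sub_rev]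
  linarith
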